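/- Let X be an abelian group and let f, g : X → ℂ be nowhere-vanishing functions, each satisfying the Hermitian condition f(−x) = conj(f(x)). If f and g satisfy the Kac–Bernstein functional equation f(x+y)·g(x−y) = f(x)·f(y)·g(x)·g(−y) for all x, y ∈ X, then there exist unitary characters α, β : X → ℂ, functions a, b : X → ℝ taking only the values ±1 and constant on cosets of 4X (i.e. a(x + 4y) = a(x) and b(x + 4y) = b(x) for all x, y), a quadratic function P : X → ℝ, and a function r : X → ℝ constant on cosets of 2X, such that f(x) = α(x)·a(x)·exp(P(x) + r(x)) and g(x) = β(x)·b(x)·exp(P(x) − r(x)) for all x ∈ X. -/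

import Mathlib

universe u

open Complex

noncomputable instance : DivisibleBy Real.Angle ℤ := by
  haveI : Fact (0 < 2 * Real.pi) := ⟨by positivity⟩
  exact inferInstanceAs (DivisibleBy (AddCircle (2 * Real.pi)) ℤ)

theorem sqrtChar {X : Type u} [AddCommGroup X] (χ : X → ℂ)
    (hmul : ∀ x y, χ (x + y) = χ x * χ y)
    (habs : ∀ x, ‖χ x‖ = 1)
    (h2 : ∀ t : X, t + t = 0 → χ t = 1) :
    ∃ α : X → ℂ, (∀ x y, α (x + y) = α x * α y) ∧ (∀ x, ‖α x‖ = 1) ∧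
      ∀ x, α x * α x = χ x := by
  have hne : ∀ x, χ x ≠ 0 := by
    intro x hx
    have := habs x
    rw [hx] at this
    simp at this
  have hχ0 : χ 0 = 1 := by
    have h := hmul 0 0
    rw [add_zero] at h
    have : χ 0 * 1 = χ 0 * χ 0 := by rw [mul_one]; exact h
    exact (mul_left_cancel₀ (hne 0) this).symm
  set c : X →+ Real.Angle :=
    { toFun := fun x => (Complex.arg (χ x) : Real.Angle)
      map_zero' := by simp [hχ0]
      map_add' := fun x y => by
        show ((χ (x + y)).arg : Real.Angle) = ((χ x).arg : Real.Angle) + ((χ y).arg : Real.Angle)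
        rw [hmul x y, Complex.arg_mul_coe_angle (hne x) (hne y)] } with hc
  set m : X →+ X :=
    { toFun := fun x => x + x
      map_zero' := by simp
      map_add' := fun x y => by abel } with hm
  have hker : ∀ t ∈ m.ker, c t = 0 := by
    intro t ht
    have h2t : t + t = 0 := ht
    simp [hc, h2 t h2t, Complex.arg_one]
  set cbar : X ⧸ m.ker →+ Real.Angle := QuotientAddGroup.lift m.ker c hker with hcbar
  set e := QuotientAddGroup.quotientKerEquivRange m with he
  set ψ : m.range →+ Real.Angle := cbar.comp e.symm.toAddMonoidHom with hψ
  set ψ' : m.range →+ ULift.{u} Real.Angle :=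
    (AddEquiv.ulift.symm.toAddMonoidHom : Real.Angle →+ ULift.{u} Real.Angle).comp ψ with hψ'
  have hψ2 : ∀ x : X, ψ ⟨x + x, ⟨x, rfl⟩⟩ = c x := by
    intro x
    have hes : e.symm ⟨x + x, ⟨x, rfl⟩⟩ = QuotientAddGroup.mk x := by
      apply e.injective
      rw [AddEquiv.apply_symm_apply]
      rfl
    simp only [hψ, AddMonoidHom.comp_apply, AddEquiv.coe_toAddMonoidHom, hes]
    rfl
  haveI mono : CategoryTheory.Mono (AddCommGrpCat.ofHom m.range.subtype) :=
    (AddCommGrpCat.mono_iff_injective _).2 m.range.subtype_injective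
  haveI inj : CategoryTheory.Injective (AddCommGrpCat.of (ULift.{u} Real.Angle)) :=
    AddCommGrpCat.injective_of_divisible _
  set ext := CategoryTheory.Injective.factorThru (AddCommGrpCat.ofHom ψ') (AddCommGrpCat.ofHom m.range.subtype) with hext
  have hfac := CategoryTheory.Injective.comp_factorThru (AddCommGrpCat.ofHom ψ') (AddCommGrpCat.ofHom m.range.subtype)
  set A : X →+ Real.Angle :=
    (AddEquiv.ulift.toAddMonoidHom : ULift.{u} Real.Angle →+ Real.Angle).comp ext.hom with hA
  have hAψ : ∀ s : m.range, A s = ψ s := by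
    intro s
    have h5 : ext (m.range.subtype s) = ψ' s := congrArg (fun k => k s) hfac
    have h6 : A s = AddEquiv.ulift (ext (m.range.subtype s)) := rfl
    rw [h6, h5]
    exact AddEquiv.apply_symm_apply (AddEquiv.ulift : ULift.{u} Real.Angle ≃+ Real.Angle) (ψ s)
  refine ⟨fun x => ((A x).toCircle : ℂ), ?_, ?_, ?_⟩
  · intro x y
    show ((A (x + y)).toCircle : ℂ) = ((A x).toCircle : ℂ) * ((A y).toCircle : ℂ)
    rw [map_add, Real.Angle.toCircle_add, Circle.coe_mul]
  · intro x
    exact Circle.norm_coe _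
  · intro x
    have h1 : A x + A x = c x := by
      have hx : A (x + x) = ψ ⟨x + x, ⟨x, rfl⟩⟩ := hAψ ⟨x + x, ⟨x, rfl⟩⟩
      rw [← map_add, hx, hψ2]
    have h3 : Real.Angle.toCircle (A x) * Real.Angle.toCircle (A x) = Real.Angle.toCircle (c x) := by
      rw [← Real.Angle.toCircle_add, h1]
    have hχcirc : Real.Angle.toCircle ((Complex.arg (χ x) : Real.Angle)) = Circle.exp (Complex.arg (χ x)) :=
      Real.Angle.toCircle_coe _
    have hmem : χ x ∈ Metric.sphere (0:ℂ) 1 := by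
      simp [habs x]
    have h4 : (((c x).toCircle : Circle) : ℂ) = χ x := by
      have hcx : c x = ((Complex.arg (χ x) : Real.Angle)) := rfl
      rw [hcx, hχcirc]
      exact congrArg Subtype.val (Circle.exp_arg ⟨χ x, hmem⟩)
    show ((A x).toCircle : ℂ) * ((A x).toCircle : ℂ) = χ x
    rw [← Circle.coe_mul, h3, h4]

/-- Phase decomposition: a Hermitian unimodular function whose square is a character and
which satisfies `u (x+y+y+y+y) = u x * u y ^ 4` splits as character times ±1 function. -/
theorem phaseSplit {X : Type u} [AddCommGroup X] (u : X → ℂ)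
    (habs : ∀ x, ‖u x‖ = 1)
    (hH : ∀ x, u (-x) = starRingEnd ℂ (u x))
    (hsq : ∀ x y, u (x + y) ^ 2 = u x ^ 2 * u y ^ 2)
    (hE : ∀ x y, u (x + y + y + y + y) = u x * u y ^ 4) :
    ∃ (α : X → ℂ) (a : X → ℝ),
      (∀ x y, α (x + y) = α x * α y) ∧ (∀ x, ‖α x‖ = 1) ∧
      (∀ x, a x = 1 ∨ a x = -1) ∧ (∀ x y : X, a (x + 4 • y) = a x) ∧
      (∀ x, u x = α x * (a x : ℂ)) := by
  have hne : ∀ x, u x ≠ 0 := by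
    intro x hx
    have := habs x
    rw [hx] at this
    simp at this
  obtain ⟨α, hαmul, hαabs, hαsq⟩ := sqrtChar (fun x => u x ^ 2)
    (fun x y => hsq x y) (fun x => by rw [norm_pow, habs x]; norm_num)
    (by
      intro t ht
      have hneg : -t = t := neg_eq_of_add_eq_zero_left ht
      have h1 : u t = starRingEnd ℂ (u t) := by rw [← hH t, hneg]
      calc u t ^ 2 = u t * starRingEnd ℂ (u t) := by rw [← h1]; ring
        _ = (‖u t‖ : ℂ) ^ 2 := by rw [Complex.mul_conj]; push_cast [Complex.normSq_eq_norm_sq]; ring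
        _ = 1 := by rw [habs t]; norm_num)
  have hαne : ∀ x, α x ≠ 0 := by
    intro x hx
    have := hαabs x
    rw [hx] at this
    simp at this
  have harg : ∀ x y : X, x + 4 • y = x + y + y + y + y := by intro x y; abel
  have hEα : ∀ x y : X, α (x + y + y + y + y) = α x * α y ^ 4 := by
    intro x y
    rw [hαmul, hαmul, hαmul, hαmul]
    ring
  have hy4 : ∀ y, α y ^ 4 = u y ^ 4 := by
    intro y
    have h := hαsq y
    calc α y ^ 4 = (α y * α y) ^ 2 := by ring
      _ = (u y ^ 2) ^ 2 := by rw [h]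
      _ = u y ^ 4 := by ring
  have hiff : ∀ x y : X, (u (x + y + y + y + y) = α (x + y + y + y + y)) ↔ u x = α x := by
    intro x y
    rw [hE x y, hEα x y, hy4 y]
    constructor
    · intro h
      exact mul_right_cancel₀ (pow_ne_zero _ (hne y)) h
    · intro h
      rw [h]
  refine ⟨α, fun x => if u x = α x then 1 else -1, hαmul, hαabs, ?_, ?_, ?_⟩
  · intro x
    show (if u x = α x then (1:ℝ) else -1) = 1 ∨ (if u x = α x then (1:ℝ) else -1) = -1
    by_cases hx : u x = α x
    · left; rw [if_pos hx]
    · right; rw [if_neg hx]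
  · intro x y
    rw [harg x y]
    show (if u (x+y+y+y+y) = α (x+y+y+y+y) then (1:ℝ) else -1) = (if u x = α x then (1:ℝ) else -1)
    by_cases hx : u x = α x
    · rw [if_pos ((hiff x y).mpr hx), if_pos hx]
    · rw [if_neg (fun h => hx ((hiff x y).mp h)), if_neg hx]
  · intro x
    have hbeta : ((fun x => if u x = α x then (1:ℝ) else -1) x) = (if u x = α x then (1:ℝ) else -1) := rfl
    rw [hbeta]
    have hsq2 : (u x - α x) * (u x + α x) = 0 := by
      have := hαsq x
      ring_nf
      ring_nf at this
      linear_combination -this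
    by_cases hx : u x = α x
    · rw [if_pos hx, hx]
      push_cast
      ring
    · rw [if_neg hx]
      rcases mul_eq_zero.mp hsq2 with h | h
      · exact absurd (sub_eq_zero.mp h) hx
      · have : u x = -α x := by linear_combination h
        rw [this]
        push_cast
        ring

theorem kac_bernstein_hermitian {X : Type*} [AddCommGroup X] (f g : X → ℂ)
    (hf0 : ∀ x, f x ≠ 0) (hg0 : ∀ x, g x ≠ 0)
    (hfH : ∀ x : X, f (-x) = starRingEnd ℂ (f x))
    (hgH : ∀ x : X, g (-x) = starRingEnd ℂ (g x))
    (hKB : ∀ x y : X, f (x + y) * g (x - y) = f x * f y * g x * g (-y)) :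
    ∃ (α β : X → ℂ) (a b : X → ℝ) (P r : X → ℝ),
      (∀ x y : X, α (x + y) = α x * α y) ∧ (∀ x : X, ‖α x‖ = 1) ∧
      (∀ x y : X, β (x + y) = β x * β y) ∧ (∀ x : X, ‖β x‖ = 1) ∧
      (∀ x : X, a x = 1 ∨ a x = -1) ∧ (∀ x y : X, a (x + 4 • y) = a x) ∧
      (∀ x : X, b x = 1 ∨ b x = -1) ∧ (∀ x y : X, b (x + 4 • y) = b x) ∧
      (∀ x y : X, P (x + y) + P (x - y) = 2 * (P x + P y)) ∧
      (∀ x y : X, r (x + 2 • y) = r x) ∧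
      (∀ x : X, f x = α x * (a x : ℂ) * Complex.exp ((P x + r x : ℝ) : ℂ)) ∧
      (∀ x : X, g x = β x * (b x : ℂ) * Complex.exp ((P x - r x : ℝ) : ℂ)) := by
  -- moduli
  have hfa : ∀ x, (0:ℝ) < ‖f x‖ := fun x => norm_pos_iff.mpr (hf0 x)
  have hga : ∀ x, (0:ℝ) < ‖g x‖ := fun x => norm_pos_iff.mpr (hg0 x)
  have hfaC : ∀ x, ((‖f x‖ : ℝ) : ℂ) ≠ 0 :=
    fun x => Complex.ofReal_ne_zero.mpr (ne_of_gt (hfa x))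
  have hgaC : ∀ x, ((‖g x‖ : ℝ) : ℂ) ≠ 0 :=
    fun x => Complex.ofReal_ne_zero.mpr (ne_of_gt (hga x))
  have habsKB : ∀ x y : X, ‖f (x+y)‖ * ‖g (x-y)‖ =
      ‖f x‖ * ‖f y‖ * ‖g x‖ * ‖g (-y)‖ := by
    intro x y
    have := congrArg norm (hKB x y)
    simpa [norm_mul] using this
  have hfeven : ∀ x, ‖f (-x)‖ = ‖f x‖ := by
    intro x; rw [hfH x]; exact Complex.norm_conj _
  have hgeven : ∀ x, ‖g (-x)‖ = ‖g x‖ := by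
    intro x; rw [hgH x]; exact Complex.norm_conj _
  -- log-moduli
  set F : X → ℝ := fun x => Real.log (‖f x‖) with hF
  set G : X → ℝ := fun x => Real.log (‖g x‖) with hG
  have hGeven : ∀ x, G (-x) = G x := fun x => by rw [hG]; simp only [hgeven]
  have hFeven : ∀ x, F (-x) = F x := fun x => by rw [hF]; simp only [hfeven]
  have hlog : ∀ x y : X, F (x+y) + G (x-y) = F x + F y + G x + G y := by
    intro x y
    have h := habsKB x y
    rw [hgeven y] at h
    have := congrArg Real.log h
    rw [Real.log_mul (ne_of_gt (hfa _)) (ne_of_gt (hga _)),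
        Real.log_mul (ne_of_gt (mul_pos (mul_pos (hfa _) (hfa _)) (hga _))) (ne_of_gt (hga _)),
        Real.log_mul (ne_of_gt (mul_pos (hfa _) (hfa _))) (ne_of_gt (hga _)),
        Real.log_mul (ne_of_gt (hfa _)) (ne_of_gt (hfa _))] at this
    simp only [hF, hG]
    linarith [this]
  have hlog' : ∀ x y : X, F (x-y) + G (x+y) = F x + F y + G x + G y := by
    intro x y
    have h := hlog x (-y)
    rw [← sub_eq_add_neg, sub_neg_eq_add, hFeven y, hGeven y] at h
    exact h
  set P : X → ℝ := fun x => (F x + G x)/2 with hP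
  set r : X → ℝ := fun x => (F x - G x)/2 with hr
  have hPquad : ∀ x y : X, P (x + y) + P (x - y) = 2 * (P x + P y) := by
    intro x y
    have h1 := hlog x y
    have h2 := hlog' x y
    simp only [hP]
    linarith
  have hrstep : ∀ x y : X, r (x + y) = r (x - y) := by
    intro x y
    have h1 := hlog x y
    have h2 := hlog' x y
    simp only [hr]
    linarith
  have hrcoset : ∀ x y : X, r (x + 2 • y) = r x := by
    intro x y
    have harg : x + 2 • y = (x + y) + y := by abel
    rw [harg, hrstep (x+y) y, add_sub_cancel_right]
  -- phases
  set u : X → ℂ := fun x => f x / ((‖f x‖ : ℝ) : ℂ) with hu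
  set v : X → ℂ := fun x => g x / ((‖g x‖ : ℝ) : ℂ) with hv
  have huabs : ∀ x, ‖u x‖ = 1 := by
    intro x
    rw [hu]
    simp only [norm_div, Complex.norm_real, Real.norm_eq_abs, abs_of_pos (hfa x), div_self (ne_of_gt (hfa x))]
  have hvabs : ∀ x, ‖v x‖ = 1 := by
    intro x
    rw [hv]
    simp only [norm_div, Complex.norm_real, Real.norm_eq_abs, abs_of_pos (hga x), div_self (ne_of_gt (hga x))]
  have hune : ∀ x, u x ≠ 0 := by
    intro x hx; have := huabs x; rw [hx] at this; simp at this
  have hvne : ∀ x, v x ≠ 0 := by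
    intro x hx; have := hvabs x; rw [hx] at this; simp at this
  have huH : ∀ x, u (-x) = starRingEnd ℂ (u x) := by
    intro x
    rw [hu]
    simp only [hfH x, map_div₀, Complex.conj_ofReal, Complex.norm_conj]
  have hvH : ∀ x, v (-x) = starRingEnd ℂ (v x) := by
    intro x
    rw [hv]
    simp only [hgH x, map_div₀, Complex.conj_ofReal, Complex.norm_conj]
  have huinv : ∀ x, u x * u (-x) = 1 := by
    intro x
    rw [huH x, Complex.mul_conj]
    push_cast [Complex.normSq_eq_norm_sq, huabs x]
    norm_num
  have hvinv : ∀ x, v x * v (-x) = 1 := by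
    intro x
    rw [hvH x, Complex.mul_conj]
    push_cast [Complex.normSq_eq_norm_sq, hvabs x]
    norm_num
  have hKBu : ∀ x y : X, u (x+y) * v (x-y) = u x * u y * v x * v (-y) := by
    intro x y
    have hd : ((‖f (x+y)‖ : ℝ) : ℂ) * ((‖g (x-y)‖ : ℝ) : ℂ) =
        ((‖f x‖ : ℝ) : ℂ) * ((‖f y‖ : ℝ) : ℂ) *
        ((‖g x‖ : ℝ) : ℂ) * ((‖g (-y)‖ : ℝ) : ℂ) := by
      exact_mod_cast congrArg Complex.ofReal (habsKB x y)
    rw [hu, hv]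
    simp only
    rw [div_mul_div_comm]
    rw [hKB x y, hd]
    field_simp
    -- squared characters
  have hchiu : ∀ x y : X, u (x+y) ^ 2 = u x ^ 2 * u y ^ 2 := by
    intro x y
    have e1 := hKBu x y
    have e2 := hKBu y x
    rw [add_comm y x] at e2
    have hv1 : v (x-y) * v (y-x) = 1 := by
      have := hvinv (x-y); rwa [neg_sub] at this
    have h12 := congrArg₂ (fun p q : ℂ => p * q) e1 e2
    linear_combination h12 - u (x+y)^2 * hv1 +
      (u x^2 * u y^2 * (v y * v (-y))) * hvinv x + (u x^2 * u y^2) * hvinv y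
  have hchiv : ∀ x y : X, v (x+y) ^ 2 = v x ^ 2 * v y ^ 2 := by
    have step_b : ∀ x y : X, v (x-y)^2 * v y^2 = v x^2 := by
      intro x y
      have e1 := hKBu x y
      have e2 := hKBu y x
      rw [add_comm y x] at e2
      have hv1 : v (x-y) * v (y-x) = 1 := by
        have := hvinv (x-y); rwa [neg_sub] at this
      have keyA : v (x-y) * v y * v (-x) * u (x+y) = v (y-x) * v x * v (-y) * u (x+y) := by
        linear_combination (v y * v (-x)) * e1 - (v x * v (-y)) * e2
      have step_a : v (x-y) * v y * v (-x) = v (y-x) * v x * v (-y) :=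
        mul_right_cancel₀ (hune (x+y)) keyA
      linear_combination (v (x-y) * v y * v x) * step_a - (v (x-y)^2 * v y^2) * hvinv x +
        (v x^2 * (v y * v (-y))) * hv1 + (v x^2) * hvinv y
    intro x y
    have sb := step_b x (-y)
    rw [sub_neg_eq_add] at sb
    linear_combination (v y^2) * sb - v (x+y)^2 * (v y * v (-y) + 1) * hvinv y
  have hW : ∀ x y : X, u (x+y) * u (x-y) * v (x+y) * v (x-y) = u x^2 * v x^2 := by
    intro x y
    have e1 := hKBu x y
    have e3 := hKBu x (-y)
    rw [← sub_eq_add_neg, sub_neg_eq_add, neg_neg] at e3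
    have h13 := congrArg₂ (fun p q : ℂ => p * q) e1 e3
    linear_combination h13 + (u x^2 * v x^2 * (v y * v (-y))) * huinv y +
      (u x^2 * v x^2) * hvinv y
  have hA' : ∀ x y : X, u (x+y+y) * (v x * v y) = u (x+y) * u y * v (x+y) := by
    intro x y
    have e := hKBu (x+y) y
    rw [add_sub_cancel_right] at e
    linear_combination (v y) * e + (u (x+y) * u y * v (x+y)) * hvinv y
  have hA'' : ∀ x y : X, u (x-y-y) * (v x * u y) = u (x-y) * v (x-y) * v y := by
    intro x y
    have e := hKBu (x-y) (-y)
    rw [← sub_eq_add_neg, sub_neg_eq_add, sub_add_cancel, neg_neg] at e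
    linear_combination (u y) * e + (u (x-y) * v (x-y) * v y) * huinv y
  have hstep2u : ∀ x y : X, u (x+y+y) * u (x-y-y) = u x ^ 2 := by
    intro x y
    have key : u (x+y+y) * u (x-y-y) * (v x^2 * v y * u y) = u x^2 * (v x^2 * v y * u y) := by
      have hAA := congrArg₂ (fun p q : ℂ => p * q) (hA' x y) (hA'' x y)
      linear_combination hAA + (u y * v y) * (hW x y)
    exact mul_right_cancel₀
      (mul_ne_zero (mul_ne_zero (pow_ne_zero _ (hvne x)) (hvne y)) (hune y)) key
  have hstep2v : ∀ x y : X, v (x+y+y) * v (x-y-y) = v x ^ 2 := by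
    intro x y
    have W' := hW x (y+y)
    rw [← add_assoc, ← sub_sub] at W'
    have key : v (x+y+y) * v (x-y-y) * (u x^2) = v x^2 * (u x^2) := by
      linear_combination W' - (v (x+y+y) * v (x-y-y)) * (hstep2u x y)
    exact mul_right_cancel₀ (pow_ne_zero _ (hune x)) key
  have hEu : ∀ x y : X, u (x+y+y+y+y) = u x * u y ^ 4 := by
    intro x y
    have s1 := hstep2u (x+y+y) y
    rw [add_sub_cancel_right, add_sub_cancel_right] at s1
    have c1 := hchiu x (y+y)
    rw [← add_assoc] at c1
    have c2 := hchiu y y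
    have key : u (x+y+y+y+y) * u x = (u x * u y^4) * u x := by
      linear_combination s1 + c1 + u x^2 * c2
    exact mul_right_cancel₀ (hune x) key
  have hEv : ∀ x y : X, v (x+y+y+y+y) = v x * v y ^ 4 := by
    intro x y
    have s1 := hstep2v (x+y+y) y
    rw [add_sub_cancel_right, add_sub_cancel_right] at s1
    have c1 := hchiv x (y+y)
    rw [← add_assoc] at c1
    have c2 := hchiv y y
    have key : v (x+y+y+y+y) * v x = (v x * v y^4) * v x := by
      linear_combination s1 + c1 + v x^2 * c2
    exact mul_right_cancel₀ (hvne x) key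
  obtain ⟨α, a, hαmul, hαabs, ha1, ha4, hua⟩ := phaseSplit u huabs huH hchiu hEu
  obtain ⟨β, b, hβmul, hβabs, hb1, hb4, hvb⟩ := phaseSplit v hvabs hvH hchiv hEv
  refine ⟨α, β, a, b, P, r, hαmul, hαabs, hβmul, hβabs, ha1, ha4, hb1, hb4, hPquad,
    hrcoset, ?_, ?_⟩
  · intro x
    have h5 : f x = u x * ((‖f x‖ : ℝ) : ℂ) := by
      rw [hu]; field_simp
      exact (mul_div_cancel_right₀ (f x) (hfaC x)).symm
    have hPr : P x + r x = F x := by simp only [hP, hr]; ring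
    have h6 : ((‖f x‖ : ℝ) : ℂ) = Complex.exp ((P x + r x : ℝ) : ℂ) := by
      rw [hPr, ← Complex.ofReal_exp]
      norm_cast
      simp only [hF]
      exact (Real.exp_log (hfa x)).symm
    rw [h5, hua x, h6]
  · intro x
    have h5 : g x = v x * ((‖g x‖ : ℝ) : ℂ) := by
      rw [hv]; field_simp
      exact (mul_div_cancel_right₀ (g x) (hgaC x)).symm
    have hPr : P x - r x = G x := by simp only [hP, hr]; ring
    have h6 : ((‖g x‖ : ℝ) : ℂ) = Complex.exp ((P x - r x : ℝ) : ℂ) := by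
      rw [hPr, ← Complex.ofReal_exp]
      norm_cast
      simp only [hG]
      exact (Real.exp_log (hga x)).symm
    rw [h5, hvb x, h6]
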